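/- Let S_Z be an orbital fuzzy iterated function system and u ∈ F*_S. Then for every x ∈ [u]^* and every y ∈ [u_x]^*, one has u_y = u_x, where u_x = lim_n Z^[n](u^x) and u_y = lim_n Z^[n](δ_y). -/

import Mathlib

open Metric Filter Topology Set

/-- The orbit of a point `x` under the family of maps `f i`:
`x` together with all images of `x` under finite compositions of the `f i`. -/
def orbitIFS {X I : Type*} (f : I → X → X) (x : X) : Set X :=
  ⋃ l : List I, {l.foldr (fun i y => f i y) x}

/-- The fractal (Hutchinson–Barnsley) operator `K ↦ ⋃ i, f i '' K`. -/
def fractalOp {X I : Type*} (f : I → X → X) (K : Set X) : Set X :=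
  ⋃ i, f i '' K

/-- Image of a fuzzy set under a map: `f(u)(y) = sup_{x ∈ f⁻¹ y} u x` (0 if empty). -/
noncomputable def fuzzyImage {X : Type*} (g : X → X) (u : X → ℝ) : X → ℝ :=
  fun y => sSup (u '' (g ⁻¹' {y}))

/-- The fuzzy Hutchinson–Barnsley operator `Z(u) = ∨ i, ρ i (f i (u))`. -/
noncomputable def Zop {X I : Type*} (f : I → X → X) (ρ : I → ℝ → ℝ) (u : X → ℝ) : X → ℝ :=
  fun y => ⨆ i, ρ i (fuzzyImage (f i) u y)

/-- The metric `d_∞(u,v) = sup_{α ∈ (0,1]} h([u]^α, [v]^α)`. -/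
noncomputable def dInfty {X : Type*} [MetricSpace X] (u v : X → ℝ) : ℝ :=
  ⨆ α : Ioc (0:ℝ) 1, hausdorffDist {x | (α:ℝ) ≤ u x} {x | (α:ℝ) ≤ v x}

/-- The support of a fuzzy set: the closure of `{x | 0 < u x}`. -/
def fsupp {X : Type*} [MetricSpace X] (u : X → ℝ) : Set X := closure {x | 0 < u x}

/-- The crisp fuzzy point `δ_s`. -/
def fdelta {X : Type*} [DecidableEq X] (s : X) : X → ℝ := fun t => if t = s then 1 else 0

/-- `u^x` : the restriction of `u` to the closure of the orbit of `w` (zero outside). -/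
noncomputable def restrictO {X I : Type*} [MetricSpace X] (f : I → X → X) (u : X → ℝ)
    (w : X) : X → ℝ :=
  (closure (orbitIFS f w)).indicator u

/-- A normal compactly supported fuzzy set (with values in `[0,1]`). -/
def IsFuzzyN {X : Type*} [MetricSpace X] (u : X → ℝ) : Prop :=
  (∀ x, u x ∈ Icc (0:ℝ) 1) ∧ (∃ x, u x = 1) ∧ IsCompact (fsupp u)

/-- An upper semicontinuous normal compactly supported fuzzy set: membership in `F*_X`. -/
def IsFuzzyStar {X : Type*} [MetricSpace X] (u : X → ℝ) : Prop :=
  IsFuzzyN u ∧ UpperSemicontinuous u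

/-- Membership in `F*_S`: for each point of positive membership there is an orbit
containing it together with a point of membership one. -/
def InFS {X I : Type*} [MetricSpace X] (f : I → X → X) (u : X → ℝ) : Prop :=
  IsFuzzyStar u ∧ ∀ x, 0 < u x → ∃ w y, x ∈ orbitIFS f w ∧ y ∈ orbitIFS f w ∧ u y = 1

/-- The orbital contraction condition. -/
def OrbitalContr {X I : Type*} [MetricSpace X] (f : I → X → X) (C : ℝ) : Prop :=
  ∀ i x, ∀ y ∈ orbitIFS f x, ∀ z ∈ orbitIFS f x, dist (f i y) (f i z) ≤ C * dist y z

/-- An admissible system of grey level maps. -/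
def Admissible {I : Type*} (ρ : I → ℝ → ℝ) : Prop :=
  (∀ i, ρ i 0 = 0) ∧ (∀ i, MonotoneOn (ρ i) (Icc (0:ℝ) 1)) ∧
  (∀ i, ∀ t ∈ Icc (0:ℝ) 1, ContinuousWithinAt (ρ i) (Ici t) t) ∧
  (∀ i, ∀ t ∈ Icc (0:ℝ) 1, ρ i t ∈ Icc (0:ℝ) 1) ∧ (∃ j, ρ j 1 = 1)

set_option linter.unusedSectionVars false

section Aux

variable {X I : Type*} [MetricSpace X] [DecidableEq X] [Finite I] [Nonempty I]
  (f : I → X → X) (ρ : I → ℝ → ℝ)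

lemma mem_orbit_self (x : X) : x ∈ orbitIFS f x :=
  mem_iUnion.2 ⟨[], rfl⟩

lemma orbit_apply (x : X) (i : I) {p : X} (hp : p ∈ orbitIFS f x) :
    f i p ∈ orbitIFS f x := by
  rcases mem_iUnion.1 hp with ⟨l, hl⟩
  simp only [mem_singleton_iff] at hl
  exact mem_iUnion.2 ⟨i :: l, by simp [hl]⟩

lemma closure_orbit_apply (hcont : ∀ i, Continuous (f i)) (x : X) (i : I) {p : X}
    (hp : p ∈ closure (orbitIFS f x)) : f i p ∈ closure (orbitIFS f x) := by
  have h1 : f i p ∈ closure (f i '' orbitIFS f x) :=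
    (image_closure_subset_closure_image (hcont i)) (mem_image_of_mem _ hp)
  refine closure_mono ?_ h1
  rintro - ⟨q, hq, rfl⟩
  exact orbit_apply f x i hq

lemma orbit_subset_closure_orbit (hcont : ∀ i, Continuous (f i)) {x a : X}
    (ha : a ∈ closure (orbitIFS f x)) : orbitIFS f a ⊆ closure (orbitIFS f x) := by
  have key : ∀ l : List I, l.foldr (fun i y => f i y) a ∈ closure (orbitIFS f x) := by
    intro l
    induction l with
    | nil => exact ha
    | cons i l ih => exact closure_orbit_apply f hcont x i ih
  intro z hz
  rcases mem_iUnion.1 hz with ⟨l, hl⟩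
  simp only [mem_singleton_iff] at hl
  subst hl
  exact key l

lemma contr_on_closure (hcont : ∀ i, Continuous (f i)) {C : ℝ} (horb : OrbitalContr f C)
    (x : X) (i : I) {p q : X} (hp : p ∈ closure (orbitIFS f x))
    (hq : q ∈ closure (orbitIFS f x)) : dist (f i p) (f i q) ≤ C * dist p q := by
  set T : Set (X × X) := {pq | dist (f i pq.1) (f i pq.2) ≤ C * dist pq.1 pq.2} with hT
  have hclosed : IsClosed T := by
    apply isClosed_le
    · exact ((hcont i).comp continuous_fst).dist ((hcont i).comp continuous_snd)
    · exact continuous_const.mul (continuous_fst.dist continuous_snd)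
  have hsub : orbitIFS f x ×ˢ orbitIFS f x ⊆ T := by
    rintro ⟨a, b⟩ ⟨ha, hb⟩
    exact horb i x a ha b hb
  have : (p, q) ∈ closure (orbitIFS f x ×ˢ orbitIFS f x) := by
    rw [closure_prod_eq]; exact ⟨hp, hq⟩
  exact (closure_minimal hsub hclosed) this

end Aux

section Aux2

set_option linter.unusedSectionVars false

variable {X I : Type*} [MetricSpace X] [DecidableEq X] [Finite I] [Nonempty I]
  (f : I → X → X) (ρ : I → ℝ → ℝ)

lemma sSup_image_mem_Icc {u : X → ℝ} (hu : ∀ z, u z ∈ Icc (0:ℝ) 1) (s : Set X) :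
    sSup (u '' s) ∈ Icc (0:ℝ) 1 := by
  rcases s.eq_empty_or_nonempty with rfl | hs
  · simp [Real.sSup_empty]
  · have hbdd : BddAbove (u '' s) := ⟨1, by rintro r ⟨q, -, rfl⟩; exact (hu q).2⟩
    obtain ⟨p, hp⟩ := hs
    refine ⟨(hu p).1.trans (le_csSup hbdd ⟨p, hp, rfl⟩), csSup_le ⟨u p, p, hp, rfl⟩ ?_⟩
    rintro r ⟨q, -, rfl⟩
    exact (hu q).2

lemma Zop_mem_Icc (hρ : Admissible ρ) {u : X → ℝ} (hu : ∀ z, u z ∈ Icc (0:ℝ) 1) (z : X) :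
    Zop f ρ u z ∈ Icc (0:ℝ) 1 := by
  have hterm : ∀ i, ρ i (fuzzyImage (f i) u z) ∈ Icc (0:ℝ) 1 := fun i =>
    hρ.2.2.2.1 i _ (sSup_image_mem_Icc hu _)
  constructor
  · have i := Classical.arbitrary I
    have : ρ i (fuzzyImage (f i) u z) ≤ ⨆ i, ρ i (fuzzyImage (f i) u z) :=
      le_ciSup (f := fun i => ρ i (fuzzyImage (f i) u z)) ((Set.finite_range _).bddAbove) i
    exact (hterm i).1.trans this
  · exact ciSup_le fun i => (hterm i).2

lemma iterate_mem_Icc (hρ : Admissible ρ) (a : X) (n : ℕ) (z : X) :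
    (Zop f ρ)^[n] (fdelta a) z ∈ Icc (0:ℝ) 1 := by
  induction n generalizing z with
  | zero =>
    simp only [Function.iterate_zero, id_eq, fdelta]
    split <;> norm_num
  | succ n ih =>
    rw [Function.iterate_succ_apply']
    exact Zop_mem_Icc f ρ hρ ih z

lemma Zop_supp (hρ : Admissible ρ) {u : X → ℝ} {z : X} (hz : Zop f ρ u z ≠ 0) :
    ∃ i p, f i p = z ∧ u p ≠ 0 := by
  by_contra h
  push_neg at h
  apply hz
  have hterm : ∀ i, ρ i (fuzzyImage (f i) u z) = 0 := by
    intro i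
    have himg : u '' (f i ⁻¹' {z}) ⊆ {0} := by
      rintro r ⟨q, hq, rfl⟩
      exact h i q (by simpa using hq)
    have hfi : fuzzyImage (f i) u z = 0 := by
      rcases (subset_singleton_iff_eq).1 himg with he | he
      · simp [fuzzyImage, he, Real.sSup_empty]
      · simp [fuzzyImage, he]
    rw [hfi]
    exact hρ.1 i
  simp only [Zop, hterm, ciSup_const]

lemma iterate_supp (hρ : Admissible ρ) (a : X) (n : ℕ) :
    ∃ W : Set X, W.Finite ∧ W ⊆ orbitIFS f a ∧
      ∀ z, (Zop f ρ)^[n] (fdelta a) z ≠ 0 → z ∈ W := by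
  induction n with
  | zero =>
    refine ⟨{a}, finite_singleton a, by simpa using mem_orbit_self f a, fun z hz => ?_⟩
    simp only [Function.iterate_zero, id_eq, fdelta] at hz
    by_contra h
    simp only [mem_singleton_iff] at h
    exact hz (if_neg h)
  | succ n ih =>
    obtain ⟨W, hWfin, hWorb, hWsupp⟩ := ih
    refine ⟨⋃ i, f i '' W, Set.finite_iUnion (fun i => hWfin.image _), ?_, ?_⟩
    · refine iUnion_subset fun i => ?_
      rintro - ⟨q, hq, rfl⟩
      exact orbit_apply f a i (hWorb hq)
    · intro z hz
      rw [Function.iterate_succ_apply'] at hz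
      obtain ⟨i, p, hpz, hp⟩ := Zop_supp f ρ hρ hz
      exact mem_iUnion.2 ⟨i, p, hWsupp p hp, hpz⟩

lemma Zop_norm (hρ : Admissible ρ) {u : X → ℝ} (hu : ∀ z, u z ∈ Icc (0:ℝ) 1)
    (hn : ∃ p, u p = 1) : ∃ z, Zop f ρ u z = 1 := by
  obtain ⟨j, hj⟩ := hρ.2.2.2.2
  obtain ⟨p, hp⟩ := hn
  refine ⟨f j p, le_antisymm (Zop_mem_Icc f ρ hρ hu _).2 ?_⟩
  have hbdd : BddAbove (u '' (f j ⁻¹' {f j p})) := ⟨1, by rintro r ⟨q, -, rfl⟩; exact (hu q).2⟩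
  have hmem : (1:ℝ) ∈ u '' (f j ⁻¹' {f j p}) := ⟨p, by simp, hp⟩
  have hsup : fuzzyImage (f j) u (f j p) = 1 := by
    refine le_antisymm (csSup_le ⟨1, hmem⟩ ?_) (le_csSup hbdd hmem)
    rintro r ⟨q, -, rfl⟩
    exact (hu q).2
  calc (1:ℝ) = ρ j (fuzzyImage (f j) u (f j p)) := by rw [hsup, hj]
    _ ≤ Zop f ρ u (f j p) := by
        show _ ≤ ⨆ i, ρ i (fuzzyImage (f i) u (f j p))
        exact le_ciSup (f := fun i => ρ i (fuzzyImage (f i) u (f j p)))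
          ((Set.finite_range _).bddAbove) j

lemma iterate_norm (hρ : Admissible ρ) (a : X) (n : ℕ) :
    ∃ z, (Zop f ρ)^[n] (fdelta a) z = 1 := by
  induction n with
  | zero => exact ⟨a, if_pos rfl⟩
  | succ n ih =>
    rw [Function.iterate_succ']
    exact Zop_norm f ρ hρ (iterate_mem_Icc f ρ hρ a n) ih

end Aux2

section Key

set_option linter.unusedSectionVars false

variable {X I : Type*} [MetricSpace X] [DecidableEq X] [Finite I] [Nonempty I]
  (f : I → X → X) (ρ : I → ℝ → ℝ)

lemma key_approx (hcont : ∀ i, Continuous (f i)) {C : ℝ} (hC0 : 0 ≤ C)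
    (horb : OrbitalContr f C) (hρ : Admissible ρ) (x : X) {a b : X}
    (ha : a ∈ closure (orbitIFS f x)) (hb : b ∈ closure (orbitIFS f x)) :
    ∀ n {α : ℝ} {z : X}, 0 < α → α ≤ (Zop f ρ)^[n] (fdelta a) z →
      ∃ z', α ≤ (Zop f ρ)^[n] (fdelta b) z' ∧ dist z z' ≤ C ^ n * dist a b := by
  intro n
  induction n with
  | zero =>
    intro α z hα hz
    simp only [Function.iterate_zero, id_eq, fdelta] at hz
    have hza : z = a := by
      by_contra h
      rw [if_neg h] at hz
      linarith
    refine ⟨b, ?_, ?_⟩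
    · simp only [Function.iterate_zero, id_eq, fdelta, if_pos rfl]
      subst hza
      rw [if_pos rfl] at hz
      exact hz
    · subst hza
      simp
  | succ n ih =>
    intro α z hα hz
    rw [Function.iterate_succ_apply'] at hz
    set ua := (Zop f ρ)^[n] (fdelta a) with hua
    simp only [Zop] at hz
    obtain ⟨i, hi⟩ := Finite.exists_max (fun i => ρ i (fuzzyImage (f i) ua z))
    have hαi : α ≤ ρ i (fuzzyImage (f i) ua z) := le_trans hz (ciSup_le hi)
    set v := fuzzyImage (f i) ua z with hv
    have hv01 : v ∈ Icc (0:ℝ) 1 := sSup_image_mem_Icc (iterate_mem_Icc f ρ hρ a n) _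
    have hvpos : 0 < v := by
      rcases eq_or_lt_of_le hv01.1 with h | h
      · rw [← h, hρ.1 i] at hαi
        linarith
      · exact h
    obtain ⟨W, hWfin, hWorb, hWsupp⟩ := iterate_supp f ρ hρ a n
    have himg_sub : ua '' (f i ⁻¹' {z}) ⊆ insert 0 (ua '' ((f i ⁻¹' {z}) ∩ W)) := by
      rintro r ⟨q, hq, rfl⟩
      by_cases h0 : ua q = 0
      · rw [h0]; exact mem_insert _ _
      · exact mem_insert_of_mem _ ⟨q, ⟨hq, hWsupp q h0⟩, rfl⟩
    have hfin : (ua '' (f i ⁻¹' {z})).Finite :=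
      Set.Finite.subset (((hWfin.inter_of_right _).image ua).insert 0) himg_sub
    have hne : (ua '' (f i ⁻¹' {z})).Nonempty := by
      by_contra h
      rw [not_nonempty_iff_eq_empty] at h
      have hv0 : v = 0 := by rw [hv, fuzzyImage, h, Real.sSup_empty]
      linarith
    have hvmem : v ∈ ua '' (f i ⁻¹' {z}) := by
      rw [hv]
      exact Set.Nonempty.csSup_mem hne hfin
    obtain ⟨p, hpz, hpv⟩ := hvmem
    have hpW : p ∈ W := hWsupp p (by rw [← hua, hpv]; exact ne_of_gt hvpos)
    have hpD : p ∈ closure (orbitIFS f x) :=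
      orbit_subset_closure_orbit f hcont ha (hWorb hpW)
    obtain ⟨p', hp'v, hp'd⟩ := ih hvpos (le_of_eq hpv.symm)
    have hp'pos : 0 < (Zop f ρ)^[n] (fdelta b) p' := lt_of_lt_of_le hvpos hp'v
    have hp'D : p' ∈ closure (orbitIFS f x) := by
      obtain ⟨W', hW'fin, hW'orb, hW'supp⟩ := iterate_supp f ρ hρ b n
      exact orbit_subset_closure_orbit f hcont hb (hW'orb (hW'supp p' (ne_of_gt hp'pos)))
    set ub := (Zop f ρ)^[n] (fdelta b) with hub
    have hub01 := iterate_mem_Icc f ρ hρ b n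
    refine ⟨f i p', ?_, ?_⟩
    · rw [Function.iterate_succ_apply']
      have hbddb : BddAbove (ub '' (f i ⁻¹' {f i p'})) :=
        ⟨1, by rintro r ⟨q, -, rfl⟩; exact (hub01 q).2⟩
      have hsub : ub p' ≤ fuzzyImage (f i) ub (f i p') :=
        le_csSup hbddb ⟨p', by simp, rfl⟩
      have hs01 : fuzzyImage (f i) ub (f i p') ∈ Icc (0:ℝ) 1 :=
        sSup_image_mem_Icc hub01 _
      have hmono : ρ i v ≤ ρ i (fuzzyImage (f i) ub (f i p')) :=
        hρ.2.1 i hv01 hs01 (le_trans hp'v hsub)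
      have hfinal : ρ i (fuzzyImage (f i) ub (f i p')) ≤ Zop f ρ ub (f i p') := by
        show _ ≤ ⨆ i', ρ i' (fuzzyImage (f i') ub (f i p'))
        exact le_ciSup (f := fun i' => ρ i' (fuzzyImage (f i') ub (f i p')))
          ((Set.finite_range _).bddAbove) i
      exact le_trans hαi (le_trans hmono hfinal)
    · have hfz : f i p = z := by simpa using hpz
      rw [← hfz]
      calc dist (f i p) (f i p') ≤ C * dist p p' :=
            contr_on_closure f hcont horb x i hpD hp'D
        _ ≤ C * (C ^ n * dist a b) := by
            apply mul_le_mul_of_nonneg_left hp'd hC0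
        _ = C ^ (n + 1) * dist a b := by ring

lemma dInfty_iterate_le (hcont : ∀ i, Continuous (f i)) {C : ℝ} (hC0 : 0 ≤ C)
    (horb : OrbitalContr f C) (hρ : Admissible ρ) (x : X) {a b : X}
    (ha : a ∈ closure (orbitIFS f x)) (hb : b ∈ closure (orbitIFS f x)) (n : ℕ) :
    dInfty ((Zop f ρ)^[n] (fdelta a)) ((Zop f ρ)^[n] (fdelta b)) ≤ C ^ n * dist a b := by
  haveI : Nonempty (Ioc (0:ℝ) 1) := ⟨⟨1, by norm_num⟩⟩
  apply ciSup_le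
  rintro ⟨α, hα⟩
  apply hausdorffDist_le_of_mem_dist (mul_nonneg (pow_nonneg hC0 n) dist_nonneg)
  · intro z hz
    obtain ⟨z', h1, h2⟩ := key_approx f ρ hcont hC0 horb hρ x ha hb n hα.1 hz
    exact ⟨z', h1, h2⟩
  · intro z hz
    obtain ⟨z', h1, h2⟩ := key_approx f ρ hcont hC0 horb hρ x hb ha n hα.1 hz
    refine ⟨z', h1, ?_⟩
    rw [dist_comm b a] at h2
    exact h2

end Key

section Levels

set_option linter.unusedSectionVars false

variable {X I : Type*} [MetricSpace X] [DecidableEq X] [Finite I] [Nonempty I]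
  (f : I → X → X) (ρ : I → ℝ → ℝ)

lemma level_star_nonempty {w : X → ℝ} (hw : IsFuzzyStar w) {β : ℝ} (hβ : β ∈ Ioc (0:ℝ) 1) :
    {z | β ≤ w z}.Nonempty := by
  obtain ⟨p, hp⟩ := hw.1.2.1
  exact ⟨p, by rw [mem_setOf_eq, hp]; exact hβ.2⟩

lemma level_star_subset {w : X → ℝ} {β : ℝ} (hβ : 0 < β) :
    {z | β ≤ w z} ⊆ fsupp w := fun z hz => subset_closure (lt_of_lt_of_le hβ hz)

lemma level_star_bounded {w : X → ℝ} (hw : IsFuzzyStar w) {β : ℝ} (hβ : 0 < β) :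
    Bornology.IsBounded {z | β ≤ w z} :=
  hw.1.2.2.isBounded.subset (level_star_subset hβ)

lemma level_star_closed {w : X → ℝ} (hw : IsFuzzyStar w) (β : ℝ) :
    IsClosed {z | β ≤ w z} := by
  have h : IsOpen (w ⁻¹' Iio β) := upperSemicontinuous_iff_isOpen_preimage.1 hw.2 β
  have : {z | β ≤ w z} = (w ⁻¹' Iio β)ᶜ := by
    ext z
    simp [not_lt]
  rw [this]
  exact h.isClosed_compl

lemma level_iter_nonempty (hρ : Admissible ρ) (a : X) (n : ℕ) {β : ℝ} (hβ : β ∈ Ioc (0:ℝ) 1) :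
    {z | β ≤ (Zop f ρ)^[n] (fdelta a) z}.Nonempty := by
  obtain ⟨p, hp⟩ := iterate_norm f ρ hρ a n
  exact ⟨p, by rw [mem_setOf_eq, hp]; exact hβ.2⟩

lemma level_hdist_le_dInfty (hρ : Admissible ρ) (a : X) (n : ℕ) {w : X → ℝ}
    (hw : IsFuzzyStar w) {α : ℝ} (hα : α ∈ Ioc (0:ℝ) 1) :
    hausdorffDist {z | α ≤ (Zop f ρ)^[n] (fdelta a) z} {z | α ≤ w z}
      ≤ dInfty ((Zop f ρ)^[n] (fdelta a)) w := by
  obtain ⟨W, hWfin, hWorb, hWsupp⟩ := iterate_supp f ρ hρ a n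
  set B := W ∪ fsupp w with hB
  have hBbdd : Bornology.IsBounded B := hWfin.isBounded.union hw.1.2.2.isBounded
  have hlevW : ∀ β : Ioc (0:ℝ) 1, {z | (β:ℝ) ≤ (Zop f ρ)^[n] (fdelta a) z} ⊆ W := by
    rintro ⟨β, hβ⟩ z hz
    exact hWsupp z (by rw [mem_setOf_eq] at hz; exact ne_of_gt (lt_of_lt_of_le hβ.1 hz))
  have hbdd : BddAbove (range fun β : Ioc (0:ℝ) 1 =>
      hausdorffDist {z | (β:ℝ) ≤ (Zop f ρ)^[n] (fdelta a) z} {z | (β:ℝ) ≤ w z}) := by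
    refine ⟨diam B, ?_⟩
    rintro r ⟨β, rfl⟩
    have h1 := level_iter_nonempty f ρ hρ a n β.2
    have h2 := level_star_nonempty hw β.2
    have hb1 : Bornology.IsBounded {z | (β:ℝ) ≤ (Zop f ρ)^[n] (fdelta a) z} :=
      hWfin.isBounded.subset (hlevW β)
    have hb2 := level_star_bounded hw β.2.1
    calc hausdorffDist _ _ ≤ diam ({z | (β:ℝ) ≤ (Zop f ρ)^[n] (fdelta a) z} ∪ {z | (β:ℝ) ≤ w z}) :=
          hausdorffDist_le_diam h1 hb1 h2 hb2
      _ ≤ diam B := diam_mono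
          (union_subset_union (hlevW β) (level_star_subset β.2.1)) hBbdd
  exact le_ciSup hbdd ⟨α, hα⟩

end Levels

section Final

set_option linter.unusedSectionVars false

variable {X I : Type*} [MetricSpace X] [DecidableEq X] [Finite I] [Nonempty I]
  (f : I → X → X) (ρ : I → ℝ → ℝ)

lemma level_hdist_iter_le (hcont : ∀ i, Continuous (f i)) {C : ℝ} (hC0 : 0 ≤ C)
    (horb : OrbitalContr f C) (hρ : Admissible ρ) (x : X) {a b : X}
    (ha : a ∈ closure (orbitIFS f x)) (hb : b ∈ closure (orbitIFS f x)) (n : ℕ)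
    {α : ℝ} (hα : 0 < α) :
    hausdorffDist {z | α ≤ (Zop f ρ)^[n] (fdelta a) z} {z | α ≤ (Zop f ρ)^[n] (fdelta b) z}
      ≤ C ^ n * dist a b := by
  apply hausdorffDist_le_of_mem_dist (mul_nonneg (pow_nonneg hC0 n) dist_nonneg)
  · intro z hz
    obtain ⟨z', h1, h2⟩ := key_approx f ρ hcont hC0 horb hρ x ha hb n hα hz
    exact ⟨z', h1, h2⟩
  · intro z hz
    obtain ⟨z', h1, h2⟩ := key_approx f ρ hcont hC0 horb hρ x hb ha n hα hz
    refine ⟨z', h1, ?_⟩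
    rw [dist_comm b a] at h2
    exact h2

lemma level_iter_bounded (hρ : Admissible ρ) (a : X) (n : ℕ) {β : ℝ} (hβ : 0 < β) :
    Bornology.IsBounded {z | β ≤ (Zop f ρ)^[n] (fdelta a) z} := by
  obtain ⟨W, hWfin, hWorb, hWsupp⟩ := iterate_supp f ρ hρ a n
  refine hWfin.isBounded.subset fun z hz => ?_
  exact hWsupp z (ne_of_gt (lt_of_lt_of_le hβ hz))

end Final

theorem stmt7final {X I : Type*} [MetricSpace X] [CompleteSpace X] [DecidableEq X]
    [Finite I] [Nonempty I]
    (f : I → X → X) (hcont : ∀ i, Continuous (f i))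
    (C : ℝ) (hC0 : 0 ≤ C) (hC1 : C < 1) (horb : OrbitalContr f C)
    (ρ : I → ℝ → ℝ) (hρ : Admissible ρ)
    (u : X → ℝ)
    (x : X) (hx : 0 < u x)
    (ux : X → ℝ) (huxStar : IsFuzzyStar ux)
    (hux : Tendsto (fun n => dInfty ((Zop f ρ)^[n] (fdelta x)) ux) atTop (nhds 0))
    (y : X) (hy : 0 < ux y)
    (uy : X → ℝ) (huyStar : IsFuzzyStar uy)
    (huy : Tendsto (fun n => dInfty ((Zop f ρ)^[n] (fdelta y)) uy) atTop (nhds 0)) :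
    uy = ux := by
  have hxD : x ∈ closure (orbitIFS f x) := subset_closure (mem_orbit_self f x)
  -- Step A : y belongs to the closure of the orbit of x
  have hyD : y ∈ closure (orbitIFS f x) := by
    rw [Metric.mem_closure_iff]
    intro ε hε
    obtain ⟨n, hn⟩ := (hux.eventually (Iio_mem_nhds hε)).exists
    have hα0 : ux y ∈ Ioc (0:ℝ) 1 := ⟨hy, (huxStar.1.1 y).2⟩
    have hd : hausdorffDist {z | ux y ≤ (Zop f ρ)^[n] (fdelta x) z} {z | ux y ≤ ux z} < ε :=
      lt_of_le_of_lt (level_hdist_le_dInfty f ρ hρ x n huxStar hα0) hn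
    have hfin : EMetric.hausdorffEdist {z | ux y ≤ (Zop f ρ)^[n] (fdelta x) z}
        {z | ux y ≤ ux z} ≠ ⊤ :=
      hausdorffEdist_ne_top_of_nonempty_of_bounded (level_iter_nonempty f ρ hρ x n hα0)
        (level_star_nonempty huxStar hα0) (level_iter_bounded f ρ hρ x n hα0.1)
        (level_star_bounded huxStar hα0.1)
    have hyin : y ∈ {z | ux y ≤ ux z} := mem_setOf_eq ▸ le_refl _
    obtain ⟨z, hz, hdz⟩ := exists_dist_lt_of_hausdorffDist_lt hyin
      (by rw [hausdorffDist_comm] at hd; exact hd)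
      (by rw [hausdorffEDist_comm]; exact hfin)
    obtain ⟨W, hWfin, hWorb, hWsupp⟩ := iterate_supp f ρ hρ x n
    exact ⟨z, hWorb (hWsupp z (ne_of_gt (lt_of_lt_of_le hα0.1 hz))), hdz⟩
  -- Step B : the level sets of uy and ux coincide
  have hlev : ∀ α : Ioc (0:ℝ) 1, {z | (α:ℝ) ≤ uy z} = {z | (α:ℝ) ≤ ux z} := by
    rintro ⟨α, hα⟩
    have hle : ∀ n : ℕ, hausdorffDist {z | α ≤ uy z} {z | α ≤ ux z} ≤
        dInfty ((Zop f ρ)^[n] (fdelta y)) uy +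
          (C ^ n * dist y x + dInfty ((Zop f ρ)^[n] (fdelta x)) ux) := by
      intro n
      have f1 : EMetric.hausdorffEdist {z | α ≤ uy z}
          {z | α ≤ (Zop f ρ)^[n] (fdelta y) z} ≠ ⊤ :=
        hausdorffEdist_ne_top_of_nonempty_of_bounded (level_star_nonempty huyStar hα)
          (level_iter_nonempty f ρ hρ y n hα) (level_star_bounded huyStar hα.1)
          (level_iter_bounded f ρ hρ y n hα.1)
      have f2 : EMetric.hausdorffEdist {z | α ≤ (Zop f ρ)^[n] (fdelta y) z}
          {z | α ≤ (Zop f ρ)^[n] (fdelta x) z} ≠ ⊤ :=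
        hausdorffEdist_ne_top_of_nonempty_of_bounded (level_iter_nonempty f ρ hρ y n hα)
          (level_iter_nonempty f ρ hρ x n hα) (level_iter_bounded f ρ hρ y n hα.1)
          (level_iter_bounded f ρ hρ x n hα.1)
      have t1 : hausdorffDist {z | α ≤ uy z} {z | α ≤ (Zop f ρ)^[n] (fdelta y) z}
          ≤ dInfty ((Zop f ρ)^[n] (fdelta y)) uy := by
        rw [hausdorffDist_comm]
        exact level_hdist_le_dInfty f ρ hρ y n huyStar hα
      have t2 : hausdorffDist {z | α ≤ (Zop f ρ)^[n] (fdelta y) z}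
          {z | α ≤ (Zop f ρ)^[n] (fdelta x) z} ≤ C ^ n * dist y x :=
        level_hdist_iter_le f ρ hcont hC0 horb hρ x hyD hxD n hα.1
      have t3 : hausdorffDist {z | α ≤ (Zop f ρ)^[n] (fdelta x) z} {z | α ≤ ux z}
          ≤ dInfty ((Zop f ρ)^[n] (fdelta x)) ux :=
        level_hdist_le_dInfty f ρ hρ x n huxStar hα
      calc hausdorffDist {z | α ≤ uy z} {z | α ≤ ux z}
          ≤ hausdorffDist {z | α ≤ uy z} {z | α ≤ (Zop f ρ)^[n] (fdelta y) z} +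
            hausdorffDist {z | α ≤ (Zop f ρ)^[n] (fdelta y) z} {z | α ≤ ux z} :=
            hausdorffDist_triangle f1
        _ ≤ hausdorffDist {z | α ≤ uy z} {z | α ≤ (Zop f ρ)^[n] (fdelta y) z} +
            (hausdorffDist {z | α ≤ (Zop f ρ)^[n] (fdelta y) z}
              {z | α ≤ (Zop f ρ)^[n] (fdelta x) z} +
             hausdorffDist {z | α ≤ (Zop f ρ)^[n] (fdelta x) z} {z | α ≤ ux z}) := by
            exact add_le_add le_rfl (hausdorffDist_triangle f2)
        _ ≤ dInfty ((Zop f ρ)^[n] (fdelta y)) uy +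
            (C ^ n * dist y x + dInfty ((Zop f ρ)^[n] (fdelta x)) ux) := by
            gcongr
    have htend : Tendsto (fun n => dInfty ((Zop f ρ)^[n] (fdelta y)) uy +
        (C ^ n * dist y x + dInfty ((Zop f ρ)^[n] (fdelta x)) ux)) atTop (nhds 0) := by
      have h2 : Tendsto (fun n => C ^ n * dist y x) atTop (nhds 0) := by
        simpa using (tendsto_pow_atTop_nhds_zero_of_lt_one hC0 hC1).mul_const (dist y x)
      simpa using huy.add (h2.add hux)
    have h0 : hausdorffDist {z | α ≤ uy z} {z | α ≤ ux z} ≤ 0 := ge_of_tendsto' htend hle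
    have heq0 : hausdorffDist {z | α ≤ uy z} {z | α ≤ ux z} = 0 :=
      le_antisymm h0 hausdorffDist_nonneg
    have hfin : EMetric.hausdorffEdist {z | α ≤ uy z} {z | α ≤ ux z} ≠ ⊤ :=
      hausdorffEdist_ne_top_of_nonempty_of_bounded (level_star_nonempty huyStar hα)
        (level_star_nonempty huxStar hα) (level_star_bounded huyStar hα.1)
        (level_star_bounded huxStar hα.1)
    have hcl := (hausdorffDist_zero_iff_closure_eq_closure hfin).1 heq0
    rw [(level_star_closed huyStar α).closure_eq, (level_star_closed huxStar α).closure_eq] at hcl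
    exact hcl
  -- Step C : pointwise equality
  funext z
  refine le_antisymm ?_ ?_
  · rcases le_or_gt (uy z) 0 with h | h
    · exact le_trans h (huxStar.1.1 z).1
    · have hz : z ∈ {w | uy z ≤ uy w} := mem_setOf_eq ▸ le_refl _
      have heq := hlev ⟨uy z, h, (huyStar.1.1 z).2⟩
      rw [heq] at hz
      exact hz
  · rcases le_or_gt (ux z) 0 with h | h
    · exact le_trans h (huyStar.1.1 z).1
    · have hz : z ∈ {w | ux z ≤ ux w} := mem_setOf_eq ▸ le_refl _
      have heq := hlev ⟨ux z, h, (huxStar.1.1 z).2⟩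
      rw [← heq] at hz
      exact hz


/-- Proposition 3.2: `u_y = u_x` for every `x ∈ [u]^*` and
`y ∈ [u_x]^*`. -/
theorem stmt7 {X I : Type*} [MetricSpace X] [CompleteSpace X] [DecidableEq X]
    [Finite I] [Nonempty I]
    (f : I → X → X) (hcont : ∀ i, Continuous (f i))
    (C : ℝ) (hC0 : 0 ≤ C) (hC1 : C < 1) (horb : OrbitalContr f C)
    (ρ : I → ℝ → ℝ) (hρ : Admissible ρ)
    (u : X → ℝ) (hu : InFS f u)
    (x : X) (hx : 0 < u x)
    (ux : X → ℝ) (huxStar : IsFuzzyStar ux)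
    (hux : Tendsto (fun n => dInfty ((Zop f ρ)^[n] (fdelta x)) ux) atTop (nhds 0))
    (y : X) (hy : 0 < ux y)
    (uy : X → ℝ) (huyStar : IsFuzzyStar uy)
    (huy : Tendsto (fun n => dInfty ((Zop f ρ)^[n] (fdelta y)) uy) atTop (nhds 0)) :
    uy = ux := by
  exact stmt7final f hcont C hC0 hC1 horb ρ hρ u x hx ux huxStar hux y hy uy huyStar huy
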